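/- In the setting of the previous statement (G finite, N ⊴ G, X a finite G-set, Y = N\X, every σ ∈ N fixing some x ∈ X, M a G/N-module), if x ∈ M[Y]₀ satisfies N_{G/N}(x) = 0 (i.e., Σ_{τ ∈ G/N} τ·x = 0), then for any section s: Y → X of the orbit map, N_G(s_!(x)) = 0, i.e., Σ_{g ∈ G} g·(s_!(x)) = 0 in M[X]₀. -/
import Mathlib


/-- if `x ∈ M[Y]₀` is killed by the norm of `G/N`, then `s_!(x)` is killed
by the norm of `G`, for any section `s` of the orbit map `p : X → Y = N\X`
(with `N = ker π` and every element of `N` fixing some point of `X`). -/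
theorem stmt3
    (G H : Type) [Group G] [Fintype G] [Group H] [Fintype H]
    (π : G →* H) (hπ : Function.Surjective π)
    (X Y : Type) [Fintype X] [Fintype Y] [DecidableEq X]
    [MulAction G X] [MulAction H Y]
    (p : X → Y)
    (hpeq : ∀ (g : G) (x : X), p (g • x) = π g • p x)
    (hfib : ∀ x x' : X, p x = p x' ↔ ∃ g : G, π g = 1 ∧ g • x = x')
    (hfix : ∀ g : G, π g = 1 → ∃ x : X, g • x = x)
    (s : Y → X) (hs : ∀ y, p (s y) = y)
    (M : Type) [AddCommGroup M] [DistribMulAction H M]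
    (x : Y → M) (hx0 : ∑ y : Y, x y = 0)
    (hnorm : ∀ y : Y, ∑ h : H, h • x (h⁻¹ • y) = 0) :
    ∀ u : X,
      (∑ g : G, π g • (∑ y ∈ Finset.univ.filter (fun y => s y = g⁻¹ • u), x y)) = 0 := by
  classical
  intro u
  -- the stabilizer count
  set c : ℕ := (Finset.univ.filter (fun n : G => π n = 1 ∧ n • u = u)).card with hc
  -- rewrite the inner sum
  have key : ∀ g : G, (∑ y ∈ Finset.univ.filter (fun y => s y = g⁻¹ • u), x y)
      = if g • s ((π g)⁻¹ • p u) = u then x ((π g)⁻¹ • p u) else 0 := by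
    intro g
    have hset : Finset.univ.filter (fun y => s y = g⁻¹ • u)
        = if g • s ((π g)⁻¹ • p u) = u then {(π g)⁻¹ • p u} else (∅ : Finset Y) := by
      ext y
      simp only [Finset.mem_filter, Finset.mem_univ, true_and]
      split_ifs with hcond
      · simp only [Finset.mem_singleton]
        constructor
        · intro hy
          have := hs y
          rw [hy] at this
          rw [hpeq] at this
          simp only [map_inv] at this
          exact this.symm
        · intro hy
          subst hy
          exact (eq_inv_smul_iff).mpr hcond
      · simp only [Finset.notMem_empty, iff_false]
        intro hy
        apply hcond
        have h1 : y = (π g)⁻¹ • p u := by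
          have := hs y
          rw [hy, hpeq] at this
          simp only [map_inv] at this
          exact this.symm
        rw [← h1, hy, smul_inv_smul]
    rw [hset]
    split_ifs with hcond <;> simp
  have key2 : (∑ g : G, π g • (∑ y ∈ Finset.univ.filter (fun y => s y = g⁻¹ • u), x y))
      = ∑ g : G, (if g • s ((π g)⁻¹ • p u) = u then π g • x ((π g)⁻¹ • p u) else 0) := by
    refine Finset.sum_congr rfl (fun g _ => ?_)
    rw [key g]
    split_ifs <;> simp
  rw [key2]
  -- sum over fibers of π
  rw [← Finset.sum_fiberwise (Finset.univ) (fun g => π g)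
      (fun g => if g • s ((π g)⁻¹ • p u) = u then π g • x ((π g)⁻¹ • p u) else 0)]
  -- card of each fiber-stabilizer set
  have hcard : ∀ h : H, (Finset.univ.filter
      (fun g : G => π g = h ∧ g • s (h⁻¹ • p u) = u)).card = c := by
    intro h
    obtain ⟨g₀, hg₀⟩ := hπ h
    have hv : p (g₀ • s (h⁻¹ • p u)) = p u := by
      rw [hpeq, hs, hg₀, smul_inv_smul]
    obtain ⟨n₀, hn₀1, hn₀2⟩ := (hfib _ _).mp hv
    set g₁ := n₀ * g₀ with hg₁
    have hg₁π : π g₁ = h := by rw [hg₁, map_mul, hn₀1, one_mul, hg₀]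
    have hg₁u : g₁ • s (h⁻¹ • p u) = u := by rw [hg₁, mul_smul]; exact hn₀2
    rw [hc]
    apply Finset.card_bij (fun g _ => g * g₁⁻¹)
    · intro a ha
      simp only [Finset.mem_filter, Finset.mem_univ, true_and] at ha ⊢
      constructor
      · rw [map_mul, map_inv, ha.1, hg₁π, mul_inv_cancel]
      · have hvu : g₁⁻¹ • u = s (h⁻¹ • p u) :=
          inv_smul_eq_iff.mpr hg₁u.symm
        rw [mul_smul, hvu, ha.2]
    · intro a ha b hb hab
      exact mul_right_cancel hab
    · intro b hb
      simp only [Finset.mem_filter, Finset.mem_univ, true_and] at hb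
      refine ⟨b * g₁, ?_, by group⟩
      simp only [Finset.mem_filter, Finset.mem_univ, true_and]
      constructor
      · rw [map_mul, hb.1, one_mul, hg₁π]
      · rw [mul_smul, hg₁u, hb.2]
  have hfibsum : ∀ h : H,
      (∑ g ∈ Finset.univ.filter (fun g : G => π g = h),
        (if g • s ((π g)⁻¹ • p u) = u then π g • x ((π g)⁻¹ • p u) else 0))
      = c • (h • x (h⁻¹ • p u)) := by
    intro h
    have : (∑ g ∈ Finset.univ.filter (fun g : G => π g = h),
        (if g • s ((π g)⁻¹ • p u) = u then π g • x ((π g)⁻¹ • p u) else 0))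
        = ∑ g ∈ Finset.univ.filter (fun g : G => π g = h),
          (if g • s (h⁻¹ • p u) = u then h • x (h⁻¹ • p u) else 0) := by
      refine Finset.sum_congr rfl (fun g hg => ?_)
      simp only [Finset.mem_filter, Finset.mem_univ, true_and] at hg
      rw [hg]
    rw [this, ← Finset.sum_filter, Finset.filter_filter, Finset.sum_const, hcard h]
  have : (∑ h : H, ∑ g ∈ Finset.univ.filter (fun g : G => π g = h),
      (if g • s ((π g)⁻¹ • p u) = u then π g • x ((π g)⁻¹ • p u) else 0))
      = ∑ h : H, c • (h • x (h⁻¹ • p u)) :=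
    Finset.sum_congr rfl (fun h _ => hfibsum h)
  rw [this, ← Finset.smul_sum, hnorm (p u), smul_zero]
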